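/- arXiv:2307.12772 — 5 statements merged into one kernel-verified Lean document; each statement's English description precedes it below -/
import Mathlib

section
/- Let ω ∈ (0, π). Then 1/4 ≤ m(ω) ≤ 1/2. (Proposition 5.3, first part: bounds for the corner constant m.) -/
/-- `M θ x = cosh((π − θ)x) / (2(1 + cosh(πx)))`. -/
noncomputable def M (θ x : ℝ) : ℝ :=
  Real.cosh ((Real.pi - θ) * x) / (2 * (1 + Real.cosh (Real.pi * x)))

/-- `m θ = sup_{x ∈ ℝ} M θ x`. -/
noncomputable def m (θ : ℝ) : ℝ := ⨆ x : ℝ, M θ x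

lemma M_le_half (ω : ℝ) (hω : ω ∈ Set.Ioo 0 Real.pi) (x : ℝ) : M ω x ≤ 1 / 2 := by
  obtain ⟨h0, h1⟩ := hω
  have hden : (0:ℝ) < 2 * (1 + Real.cosh (Real.pi * x)) := by
    have := Real.cosh_pos (x := Real.pi * x); nlinarith
  rw [M, div_le_iff₀ hden]
  have hcosh : Real.cosh ((Real.pi - ω) * x) ≤ Real.cosh (Real.pi * x) := by
    rw [Real.cosh_le_cosh, abs_mul, abs_mul]
    have : |Real.pi - ω| ≤ |Real.pi| := by
      rw [abs_of_nonneg (by linarith), abs_of_nonneg Real.pi_pos.le]; linarith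
    exact mul_le_mul_of_nonneg_right this (abs_nonneg x)
  nlinarith

theorem stmt_0 (ω : ℝ) (hω : ω ∈ Set.Ioo 0 Real.pi) :
    1 / 4 ≤ m ω ∧ m ω ≤ 1 / 2 := by
  have hbdd : BddAbove (Set.range fun x => M ω x) :=
    ⟨1/2, by rintro _ ⟨x, rfl⟩; exact M_le_half ω hω x⟩
  constructor
  · have h0 : M ω 0 = 1 / 4 := by simp [M]; norm_num
    calc (1:ℝ)/4 = M ω 0 := h0.symm
      _ ≤ m ω := le_ciSup hbdd 0
  · exact ciSup_le fun x => M_le_half ω hω x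
end

section
/- m(ω) = 1/4 for every ω ∈ [π/2, π). (Proposition 5.3, last part.) -/
lemma M_le_quarter (ω x : ℝ) (hω : ω ∈ Set.Ico (Real.pi / 2) Real.pi) :
    M ω x ≤ 1 / 4 := by
  obtain ⟨h1, h2⟩ := hω
  have ha0 : 0 ≤ Real.pi - ω := by linarith
  have ha : Real.pi - ω ≤ Real.pi / 2 := by linarith
  set t := Real.pi / 2 * x with ht
  have h2t : Real.pi * x = 2 * t := by rw [ht]; ring
  have hc1 : Real.cosh ((Real.pi - ω) * x) ≤ Real.cosh t := by
    apply Real.cosh_le_cosh.2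
    rw [abs_mul, abs_mul]
    gcongr
  have hc2 : Real.cosh t ≤ (1 + Real.cosh (Real.pi * x)) / 2 := by
    rw [h2t, Real.cosh_two_mul]
    nlinarith [Real.one_le_cosh t]
  have hpos : 0 < 2 * (1 + Real.cosh (Real.pi * x)) := by
    nlinarith [Real.one_le_cosh (Real.pi * x)]
  rw [M, div_le_div_iff₀ hpos (by norm_num)]
  nlinarith [Real.one_le_cosh (Real.pi * x)]

theorem stmt_4 (ω : ℝ) (hω : ω ∈ Set.Ico (Real.pi / 2) Real.pi) :
    m ω = 1 / 4 := by
  have hbdd : BddAbove (Set.range (M ω)) :=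
    ⟨1 / 4, by rintro _ ⟨x, rfl⟩; exact M_le_quarter ω x hω⟩
  refine le_antisymm (ciSup_le fun x => M_le_quarter ω x hω) ?_
  have h0 : M ω 0 = 1 / 4 := by simp [M]; norm_num
  calc (1:ℝ)/4 = M ω 0 := h0.symm
    _ ≤ m ω := le_ciSup hbdd 0
end

section
/- For every ω ∈ [π/2, π) the function M_ω is strictly decreasing on [0, ∞): if 0 ≤ x < y then M_ω(y) < M_ω(x). (Claim established in the proof of Proposition 5.3.) -/
lemma key_ineq (a b x : ℝ) (ha : 0 < a) (hab : a ≤ b) (hx : 0 < x) :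
    a * Real.sinh (a*x) * (1 + Real.cosh ((a+b)*x))
      < (a+b) * Real.cosh (a*x) * Real.sinh ((a+b)*x) := by
  have h1 : (a+b)*x = b*x + a*x := by ring
  rw [h1, Real.sinh_add, Real.cosh_add]
  have hb : 0 < b := lt_of_lt_of_le ha hab
  have hsa : 0 < Real.sinh (a*x) := Real.sinh_pos_iff.mpr (mul_pos ha hx)
  have hsb : 0 < Real.sinh (b*x) := Real.sinh_pos_iff.mpr (mul_pos hb hx)
  have hsab : Real.sinh (a*x) ≤ Real.sinh (b*x) :=
    Real.sinh_le_sinh.mpr (mul_le_mul_of_nonneg_right hab hx.le)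
  have hca : 1 ≤ Real.cosh (a*x) := Real.one_le_cosh _
  have hcb : 1 ≤ Real.cosh (b*x) := Real.one_le_cosh _
  have hsq : Real.cosh (a*x) ^ 2 = Real.sinh (a*x) ^ 2 + 1 := Real.cosh_sq _
  have heq : a * Real.sinh (b*x) * Real.cosh (a*x)^2
      = a * Real.sinh (b*x) * Real.sinh (a*x)^2 + a * Real.sinh (b*x) := by
    rw [hsq]; ring
  have hpos1 : 0 < b * (Real.sinh (b*x) * Real.cosh (a*x)^2) := by positivity
  have hpos2 : 0 < b * (Real.cosh (b*x) * (Real.cosh (a*x) * Real.sinh (a*x))) := by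
    have hca' : 0 < Real.cosh (a*x) := Real.cosh_pos _
    have hcb' : 0 < Real.cosh (b*x) := Real.cosh_pos _
    positivity
  nlinarith [heq, hpos1, hpos2, mul_le_mul_of_nonneg_left hsab ha.le]

theorem stmt_6 (ω : ℝ) (hω : ω ∈ Set.Ico (Real.pi / 2) Real.pi)
    (x y : ℝ) (hx : 0 ≤ x) (hxy : x < y) :
    M ω y < M ω x := by
  obtain ⟨h1, h2⟩ := hω
  set a := Real.pi - ω with hadef
  have ha : 0 < a := sub_pos.mpr h2
  have hab : a ≤ ω := by
    have := Real.pi_pos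
    simp only [hadef]; linarith
  have hden : ∀ t : ℝ, (2 * (1 + Real.cosh (Real.pi * t))) ≠ 0 := by
    intro t
    have := Real.cosh_pos (x := Real.pi * t)
    positivity
  have hderiv : ∀ t : ℝ, HasDerivAt (M ω)
      ((a * Real.sinh (a*t) * (2 * (1 + Real.cosh (Real.pi*t)))
        - Real.cosh (a*t) * (2 * (Real.pi * Real.sinh (Real.pi*t))))
        / (2 * (1 + Real.cosh (Real.pi*t)))^2) t := by
    intro t
    have hnum : HasDerivAt (fun s => Real.cosh (a*s)) (a * Real.sinh (a*t)) t := by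
      have := ((hasDerivAt_id t).const_mul a).cosh
      simpa [mul_comm] using this
    have hd : HasDerivAt (fun s => 2 * (1 + Real.cosh (Real.pi*s)))
        (2 * (Real.pi * Real.sinh (Real.pi*t))) t := by
      have h := ((hasDerivAt_id t).const_mul Real.pi).cosh
      have h2 := (h.const_add (1:ℝ)).const_mul (2:ℝ)
      simpa [mul_comm, mul_assoc] using h2
    exact hnum.div hd (hden t)
  have hderiv_neg : ∀ t : ℝ, t ∈ interior (Set.Ici (0:ℝ)) → deriv (M ω) t < 0 := by
    intro t ht
    rw [interior_Ici] at ht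
    have ht' : (0:ℝ) < t := ht
    rw [(hderiv t).deriv]
    apply div_neg_of_neg_of_pos
    · have hkey := key_ineq a ω t ha hab ht'
      have hpi : a + ω = Real.pi := by simp [hadef]
      rw [hpi] at hkey
      nlinarith [hkey]
    · have := Real.cosh_pos (x := Real.pi * t)
      positivity
  have hanti : StrictAntiOn (M ω) (Set.Ici 0) := by
    apply strictAntiOn_of_deriv_neg (convex_Ici 0)
    · exact (fun t _ => (hderiv t).differentiableAt.continuousAt.continuousWithinAt)
    · exact hderiv_neg
  exact hanti hx (le_trans hx hxy.le) hxy
end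

section
/- Let H be a complex Hilbert space, let Γ be a bounded self-adjoint operator on H, let c, ε ∈ ℝ with ε² ≠ c, and let K be a compact operator on H such that Γ∘Γ = c·1 + K. Then the kernel of ε·1 + Γ is finite-dimensional and the range of ε·1 + Γ is closed. (The Fredholmness mechanism underlying the proofs of Theorem 4.4 and Theorem 5.2: if Γ² is a real constant plus a compact operator, then ε·1 + Γ is Fredholm whenever ε² differs from that constant.) -/
open Filter Topology

theorem stmt_14 {H : Type*} [NormedAddCommGroup H] [InnerProductSpace ℂ H] [CompleteSpace H]
    (Γ K : H →L[ℂ] H) (hΓ : IsSelfAdjoint Γ) (hK : IsCompactOperator K)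
    (c ε : ℝ) (hc : ε ^ 2 ≠ c)
    (hsq : Γ ∘L Γ = (c : ℂ) • (1 : H →L[ℂ] H) + K) :
    FiniteDimensional ℂ (LinearMap.ker (((ε : ℂ) • (1 : H →L[ℂ] H) + Γ : H →L[ℂ] H) : H →ₗ[ℂ] H)) ∧
      IsClosed (Set.range ((ε : ℂ) • (1 : H →L[ℂ] H) + Γ : H →L[ℂ] H)) := by
  set T : H →L[ℂ] H := (ε : ℂ) • (1 : H →L[ℂ] H) + Γ with hT
  set S : H →L[ℂ] H := Γ - (ε : ℂ) • (1 : H →L[ℂ] H) with hS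
  set μ : ℂ := (c : ℂ) - (ε : ℂ) ^ 2 with hμdef
  have hμ : μ ≠ 0 := by
    rw [hμdef, sub_ne_zero]
    intro h
    exact hc (by exact_mod_cast h.symm)
  -- key algebraic identity: S (T x) = μ • x + K x
  have hST : ∀ x : H, S (T x) = μ • x + K x := by
    intro x
    have h2 : Γ (Γ x) = (c : ℂ) • x + K x := by
      have := congrArg (fun f : H →L[ℂ] H => f x) hsq
      simpa using this
    simp only [hS, hT, ContinuousLinearMap.sub_apply, ContinuousLinearMap.add_apply,
      ContinuousLinearMap.smul_apply, ContinuousLinearMap.one_apply, map_add, map_smul, h2,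
      hμdef]
    module
  -- a compact set containing K '' closedBall 0 1
  obtain ⟨Kc, hKc, hKcsub⟩ : ∃ Kc : Set H, IsCompact Kc ∧ K '' Metric.closedBall 0 1 ⊆ Kc := by
    obtain ⟨Kc, h1, h2⟩ :=
      IsCompactOperator.image_closedBall_subset_compact (f := (K : H →ₗ[ℂ] H)) hK 1
    exact ⟨Kc, h1, h2⟩
  set N : Submodule ℂ H := LinearMap.ker (T : H →ₗ[ℂ] H) with hN
  have hNx : ∀ x ∈ N, K x = -μ • x := by
    intro x hx
    have h0 : T x = 0 := hx
    have h1 := hST x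
    rw [h0, map_zero] at h1
    have h2 : K x = -(μ • x) := by
      rw [eq_neg_iff_add_eq_zero, add_comm]
      exact h1.symm
    simpa [neg_smul] using h2
  have hNclosed : IsClosed (N : Set H) := ContinuousLinearMap.isClosed_ker T
  -- finite dimensionality of the kernel
  have hfin : FiniteDimensional ℂ N := by
    refine FiniteDimensional.of_isCompact_closedBall₀ ℂ (r := 1) one_pos ?_
    have hA : IsCompact ((N : Set H) ∩ Metric.closedBall 0 1) := by
      refine IsCompact.of_isClosed_subset (hKc.smul (-μ⁻¹ : ℂ))
        (hNclosed.inter Metric.isClosed_closedBall) ?_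
      rintro x ⟨hxN, hxb⟩
      refine ⟨K x, hKcsub ⟨x, hxb, rfl⟩, ?_⟩
      rw [hNx x hxN]
      show (-μ⁻¹) • (-μ) • x = x
      rw [smul_smul, neg_mul_neg, inv_mul_cancel₀ hμ, one_smul]
    have himg : (Subtype.val '' Metric.closedBall (0 : N) 1)
        = (N : Set H) ∩ Metric.closedBall 0 1 := by
      ext x
      constructor
      · rintro ⟨⟨y, hy⟩, hyb, rfl⟩
        refine ⟨hy, ?_⟩
        simpa [Metric.mem_closedBall, dist_eq_norm] using hyb
      · rintro ⟨hxN, hxb⟩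
        exact ⟨⟨x, hxN⟩, by simpa [Metric.mem_closedBall, dist_eq_norm] using hxb, rfl⟩
    rw [← himg] at hA
    exact (IsEmbedding.subtypeVal.isCompact_iff).2 hA
  refine ⟨hfin, ?_⟩
  -- closedness of the range
  haveI : CompleteSpace N := FiniteDimensional.complete ℂ N
  set M : Submodule ℂ H := Nᗮ with hM
  have hMclosed : IsClosed (M : Set H) := N.isClosed_orthogonal
  haveI : CompleteSpace M := hMclosed.completeSpace_coe
  -- T is bounded below on M
  have hbdd : ∃ C : ℝ, 0 < C ∧ ∀ x ∈ M, ‖x‖ ≤ C * ‖T x‖ := by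
    by_contra hcon
    push_neg at hcon
    have hseq : ∀ n : ℕ, ∃ u : H, u ∈ M ∧ ‖u‖ = 1 ∧ ‖T u‖ < 1 / (n + 1) := by
      intro n
      obtain ⟨x, hxM, hx⟩ := hcon ((n : ℝ) + 1) (by positivity)
      have hx0 : x ≠ 0 := by
        intro h
        rw [h] at hx
        simp only [map_zero, norm_zero, mul_zero] at hx
        exact lt_irrefl 0 hx
      have hxpos : 0 < ‖x‖ := norm_pos_iff.2 hx0
      refine ⟨((‖x‖ : ℂ))⁻¹ • x, M.smul_mem _ hxM, ?_, ?_⟩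
      · rw [norm_smul]
        simp [hxpos.ne']
      · rw [map_smul, norm_smul]
        have hns : ‖((‖x‖ : ℂ))⁻¹‖ = ‖x‖⁻¹ := by
          rw [norm_inv]
          simp
        rw [hns]
        have hn1 : (0 : ℝ) < (n : ℝ) + 1 := by positivity
        rw [inv_mul_lt_iff₀ hxpos, mul_one_div, lt_div_iff₀ hn1, mul_comm]
        exact hx
    choose u huM hu1 huT using hseq
    have hTu : Tendsto (fun n => T (u n)) atTop (𝓝 0) := by
      have hl : Tendsto (fun n : ℕ => 1 / ((n : ℝ) + 1)) atTop (𝓝 0) :=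
        tendsto_one_div_add_atTop_nhds_zero_nat
      exact squeeze_zero_norm (fun n => (huT n).le) hl
    have hKu : ∀ n, K (u n) ∈ Kc := fun n =>
      hKcsub ⟨u n, by simp [Metric.mem_closedBall, dist_eq_norm, hu1 n], rfl⟩
    obtain ⟨y, hyKc, φ, hφ, hy⟩ := hKc.tendsto_subseq hKu
    set z : H := μ⁻¹ • (0 - y) with hz
    have h1 : ∀ n, u (φ n) = μ⁻¹ • (S (T (u (φ n))) - K (u (φ n))) := by
      intro n
      rw [hST, add_sub_cancel_right, smul_smul, inv_mul_cancel₀ hμ, one_smul]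
    have h2 : Tendsto (fun n => S (T (u (φ n)))) atTop (𝓝 0) := by
      have := (S.continuous.tendsto 0).comp (hTu.comp hφ.tendsto_atTop)
      simpa [Function.comp_def] using this
    have h3 : Tendsto (fun n => S (T (u (φ n))) - K (u (φ n))) atTop (𝓝 (0 - y)) := h2.sub hy
    have hulim : Tendsto (fun n => u (φ n)) atTop (𝓝 z) := by
      have := h3.const_smul (μ⁻¹)
      refine this.congr fun n => (h1 n).symm
    have hz1 : ‖z‖ = 1 := by
      have hn : Tendsto (fun n => ‖u (φ n)‖) atTop (𝓝 ‖z‖) := hulim.norm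
      have hc1 : Tendsto (fun n : ℕ => ‖u (φ n)‖) atTop (𝓝 1) := by
        simp only [hu1]
        exact tendsto_const_nhds
      exact tendsto_nhds_unique hn hc1
    have hzM : z ∈ M := hMclosed.mem_of_tendsto hulim
      (Filter.Eventually.of_forall fun n => huM (φ n))
    have hzN : z ∈ N := by
      have hTz : Tendsto (fun n => T (u (φ n))) atTop (𝓝 (T z)) :=
        (T.continuous.tendsto z).comp hulim
      have h0 : T z = 0 := tendsto_nhds_unique hTz (hTu.comp hφ.tendsto_atTop)
      exact h0
    have hz0 : z = 0 := by
      have := (Submodule.mem_orthogonal N z).1 hzM z hzN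
      exact inner_self_eq_zero.1 this
    rw [hz0, norm_zero] at hz1
    exact one_ne_zero hz1.symm
  obtain ⟨C, hC0, hC⟩ := hbdd
  -- restriction of T to M
  set Tm : M →L[ℂ] H := T.comp M.subtypeL with hTm
  have hanti : AntilipschitzWith (⟨C, hC0.le⟩ : NNReal) Tm := by
    refine Tm.antilipschitz_of_bound fun x => ?_
    exact hC (x : H) x.2
  have hclosed : IsClosed (Set.range Tm) :=
    hanti.isClosed_range Tm.uniformContinuous
  have hrange : Set.range (T : H → H) = Set.range Tm := by
    apply Set.Subset.antisymm
    · rintro _ ⟨x, rfl⟩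
      obtain ⟨v, hv, w, hw, rfl⟩ := N.exists_add_mem_mem_orthogonal x
      have hTv : T v = 0 := hv
      exact ⟨⟨w, hw⟩, by simp [hTm, hTv]⟩
    · rintro _ ⟨⟨x, hx⟩, rfl⟩
      exact ⟨x, rfl⟩
  rw [hrange]
  exact hclosed
end

section
/- Let θ ∈ (0, 2π) and let ε, μ ∈ ℝ with ε² − μ² > 0. Then (1 − (ε² − μ²)·M_θ(2η))² ≠ 0 for all η ∈ ℝ if and only if ε² − μ² < 1/m(θ). (The corner criterion established in the proof of Theorem 5.2: the corner determinant Δ_a(ξ) = (1 − (ε² − μ²)·M_θ(2η))² at a corner of interior angle θ is nonvanishing for all ξ = η + i/2 exactly when ε² − μ² < 1/m(θ).) -/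
lemma M_pos (θ x : ℝ) : 0 < M θ x := by
  apply div_pos (Real.cosh_pos _)
  positivity

lemma M_cont (θ : ℝ) : Continuous (M θ) := by
  apply Continuous.div
  · exact Real.continuous_cosh.comp (continuous_const.mul continuous_id)
  · exact continuous_const.mul (continuous_const.add
      (Real.continuous_cosh.comp (continuous_const.mul continuous_id)))
  · intro x; positivity

lemma M_le_exp (θ : ℝ) (hθ : θ ∈ Set.Ioo 0 (2 * Real.pi)) (x : ℝ) :
    M θ x ≤ Real.exp (-(Real.pi - |Real.pi - θ|) * |x|) := by
  obtain ⟨h1, h2⟩ := hθ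
  have habs : |Real.pi - θ| < Real.pi := by
    rw [abs_lt]; constructor <;> linarith
  have hnum : Real.cosh ((Real.pi - θ) * x) ≤ Real.exp (|Real.pi - θ| * |x|) := by
    calc Real.cosh ((Real.pi - θ) * x) = Real.cosh (|(Real.pi - θ) * x|) := by
          rw [Real.cosh_abs]
      _ ≤ Real.exp (|(Real.pi - θ) * x|) := by
          rw [Real.cosh_eq]
          have := Real.exp_pos (-|(Real.pi - θ) * x|)
          have := Real.exp_le_exp.2 (neg_abs_le ((Real.pi - θ) * x))
          have := Real.exp_le_exp.2 (le_abs_self ((Real.pi - θ) * x))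
          nlinarith [Real.exp_le_one_iff.2 (neg_nonpos.2 (abs_nonneg ((Real.pi - θ) * x)))]
      _ = Real.exp (|Real.pi - θ| * |x|) := by rw [abs_mul]
  have hden : Real.exp (Real.pi * |x|) ≤ 2 * (1 + Real.cosh (Real.pi * x)) := by
    have : Real.cosh (Real.pi * |x|) = Real.cosh (Real.pi * x) := by
      rw [← Real.cosh_abs (Real.pi * x), abs_mul, abs_of_nonneg Real.pi_pos.le]
    rw [Real.cosh_eq] at this
    have := Real.exp_pos (-(Real.pi * |x|))
    nlinarith
  have hd : (0:ℝ) < 2 * (1 + Real.cosh (Real.pi * x)) := by positivity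
  rw [M, div_le_iff₀ hd]
  calc Real.cosh ((Real.pi - θ) * x) ≤ Real.exp (|Real.pi - θ| * |x|) := hnum
    _ = Real.exp (-(Real.pi - |Real.pi - θ|) * |x|) * Real.exp (Real.pi * |x|) := by
        rw [← Real.exp_add]; ring_nf
    _ ≤ Real.exp (-(Real.pi - |Real.pi - θ|) * |x|) * (2 * (1 + Real.cosh (Real.pi * x))) := by
        exact mul_le_mul_of_nonneg_left hden (Real.exp_pos _).le

lemma M_tendsto (θ : ℝ) (hθ : θ ∈ Set.Ioo 0 (2 * Real.pi)) :
    Filter.Tendsto (M θ) (Filter.cocompact ℝ) (nhds 0) := by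
  obtain ⟨h1, h2⟩ := hθ
  have habs : |Real.pi - θ| < Real.pi := by rw [abs_lt]; constructor <;> linarith
  have hδ : 0 < Real.pi - |Real.pi - θ| := by linarith
  have hb : Filter.Tendsto (fun x : ℝ => Real.exp (-(Real.pi - |Real.pi - θ|) * |x|))
      (Filter.cocompact ℝ) (nhds 0) := by
    have h1' : Filter.Tendsto (fun x : ℝ => |x|) (Filter.cocompact ℝ) Filter.atTop := by
      exact tendsto_norm_cocompact_atTop (E := ℝ)
    have h2' : Filter.Tendsto (fun t : ℝ => Real.exp (-(Real.pi - |Real.pi - θ|) * t))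
        Filter.atTop (nhds 0) := by
      apply Real.tendsto_exp_atBot.comp
      exact Filter.Tendsto.const_mul_atTop_of_neg (neg_neg_iff_pos.2 hδ) Filter.tendsto_id
    exact h2'.comp h1'
  exact squeeze_zero (fun x => (M_pos θ x).le) (M_le_exp θ ⟨h1, h2⟩) hb

lemma M_bddAbove (θ : ℝ) (hθ : θ ∈ Set.Ioo 0 (2 * Real.pi)) :
    BddAbove (Set.range (M θ)) := by
  obtain ⟨x₀, hx₀⟩ := (M_cont θ).exists_forall_ge' 0
    (((M_tendsto θ hθ).eventually_lt_const (M_pos θ 0)).mono fun x hx => hx.le)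
  exact ⟨M θ x₀, by rintro _ ⟨y, rfl⟩; exact hx₀ y⟩

lemma M_max (θ : ℝ) (hθ : θ ∈ Set.Ioo 0 (2 * Real.pi)) :
    ∃ x₀, m θ = M θ x₀ := by
  obtain ⟨x₀, hx₀⟩ := (M_cont θ).exists_forall_ge' 0
    (((M_tendsto θ hθ).eventually_lt_const (M_pos θ 0)).mono fun x hx => hx.le)
  exact ⟨x₀, le_antisymm (ciSup_le hx₀) (le_ciSup (M_bddAbove θ hθ) x₀)⟩

theorem stmt_17 (θ : ℝ) (hθ : θ ∈ Set.Ioo 0 (2 * Real.pi)) (ε μ : ℝ)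
    (h : 0 < ε ^ 2 - μ ^ 2) :
    (∀ η : ℝ, (1 - (ε ^ 2 - μ ^ 2) * M θ (2 * η)) ^ 2 ≠ 0) ↔
      ε ^ 2 - μ ^ 2 < 1 / m θ := by
  set c := ε ^ 2 - μ ^ 2 with hc
  have hm_pos : 0 < m θ := lt_of_lt_of_le (M_pos θ 0) (le_ciSup (M_bddAbove θ hθ) 0)
  constructor
  · intro hall
    by_contra hge
    push_neg at hge
    -- 1/c ≤ m θ
    have h1c : 1 / c ≤ m θ := by
      rw [div_le_iff₀ hm_pos] at hge
      rw [div_le_iff₀ h]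
      nlinarith
    obtain ⟨x₀, hx₀⟩ := M_max θ hθ
    have hmax : 1 / c ≤ M θ x₀ := hx₀ ▸ h1c
    have hsmall : ∃ y : ℝ, M θ y < 1 / c := by
      have := (M_tendsto θ hθ).eventually_lt_const (by positivity : (0:ℝ) < 1 / c)
      exact this.exists
    obtain ⟨y, hy⟩ := hsmall
    have : (1 : ℝ) / c ∈ Set.uIcc (M θ y) (M θ x₀) :=
      Set.mem_uIcc.2 (Or.inl ⟨hy.le, hmax⟩)
    obtain ⟨x, -, hx⟩ := intermediate_value_uIcc (M_cont θ).continuousOn this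
    have := hall (x / 2)
    rw [mul_div_cancel₀ x two_ne_zero] at this
    rw [hx] at this
    apply this
    rw [mul_one_div, div_self (ne_of_gt h)]
    ring
  · intro hlt η
    have hle : M θ (2 * η) ≤ m θ := le_ciSup (M_bddAbove θ hθ) (2 * η)
    rw [lt_div_iff₀ hm_pos] at hlt
    have : c * M θ (2 * η) < 1 :=
      lt_of_le_of_lt (mul_le_mul_of_nonneg_left hle h.le) hlt
    have hpos : 0 < 1 - c * M θ (2 * η) := by linarith
    exact pow_ne_zero 2 (ne_of_gt hpos)
end
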